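/- Every 6-cycle of $K_6$ is a subgraph of exactly one of the 10 complete bipartite subgraphs $K_{3,3}$ of $K_6$, and every 5-cycle of $K_6$ is a subgraph of exactly one of the 6 complete subgraphs $K_5$ of $K_6$. -/

import Mathlib

open SimpleGraph

/-- `E` is the edge set of a `k`-cycle in the complete graph on `Fin n`. -/
def IsCycleEdgeSet (n k : ℕ) [NeZero k] (E : Finset (Sym2 (Fin n))) : Prop :=
  3 ≤ k ∧ ∃ f : Fin k ↪ Fin n,
    E = Finset.image (fun i => s(f i, f (i + 1))) Finset.univ

section K33
variable (f : Fin 6 ↪ Fin 6)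

def Ae : Set (Fin 6) := {f 0, f 2, f 4}
def Ao : Set (Fin 6) := {f 1, f 3, f 5}

lemma hfbij : Function.Bijective f := Finite.injective_iff_bijective.mp f.injective

lemma mem_Ae_iff (i : Fin 6) : f i ∈ Ae f ↔ i = 0 ∨ i = 2 ∨ i = 4 := by
  simp [Ae, f.injective.eq_iff]

lemma mem_Ao_iff (i : Fin 6) : f i ∈ Ao f ↔ i = 1 ∨ i = 3 ∨ i = 5 := by
  simp [Ao, f.injective.eq_iff]

def mixedF (a b : Fin 6) : Prop := (a ∈ Ae f ∧ b ∈ Ao f) ∨ (a ∈ Ao f ∧ b ∈ Ae f)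

/-- characterization of subgraphs isomorphic to K33 -/
lemma k33_char (H : Subgraph (completeGraph (Fin 6)))
    (e : H.coe ≃g completeBipartiteGraph (Fin 3) (Fin 3)) :
    ∃ A B : Set (Fin 6), Disjoint A B ∧ A ∪ B = H.verts ∧
      ∀ a b, H.Adj a b ↔ ((a ∈ A ∧ b ∈ B) ∨ (a ∈ B ∧ b ∈ A)) := by
  refine ⟨{v | ∃ h : v ∈ H.verts, (e ⟨v, h⟩).isLeft}, {v | ∃ h : v ∈ H.verts, (e ⟨v, h⟩).isRight},
    ?_, ?_, ?_⟩
  · rw [Set.disjoint_left]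
    rintro v ⟨h, hl⟩ ⟨h', hr⟩
    cases hev : e ⟨v, h⟩ <;> rw [hev] at hl hr <;> simp_all
  · ext v
    constructor
    · rintro (⟨h, _⟩ | ⟨h, _⟩) <;> exact h
    · intro h
      cases hev : e ⟨v, h⟩
      · exact Or.inl ⟨h, by rw [hev]; rfl⟩
      · exact Or.inr ⟨h, by rw [hev]; rfl⟩
  · intro a b
    constructor
    · intro hab
      have ha := H.edge_vert hab
      have hb := H.edge_vert hab.symm
      have hc : H.coe.Adj ⟨a, ha⟩ ⟨b, hb⟩ := hab
      have := e.map_adj_iff.mpr hc  -- may need the right name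
      rcases this with ⟨h1, h2⟩ | ⟨h1, h2⟩
      · exact Or.inl ⟨⟨ha, h1⟩, ⟨hb, h2⟩⟩
      · exact Or.inr ⟨⟨ha, h1⟩, ⟨hb, h2⟩⟩
    · rintro (⟨⟨ha, h1⟩, ⟨hb, h2⟩⟩ | ⟨⟨ha, h1⟩, ⟨hb, h2⟩⟩)
      · exact e.map_adj_iff.mp (Or.inl ⟨h1, h2⟩)
      · exact e.map_adj_iff.mp (Or.inr ⟨h1, h2⟩)

end K33

section Parity
variable (f : Fin 6 ↪ Fin 6)

lemma verts_univ (H : Subgraph (completeGraph (Fin 6)))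
    (hcyc : ∀ i : Fin 6, H.Adj (f i) (f (i + 1))) : H.verts = Set.univ := by
  ext v
  simp only [Set.mem_univ, iff_true]
  obtain ⟨i, rfl⟩ := (hfbij f).surjective v
  exact H.edge_vert (hcyc i)

lemma adj_char (H : Subgraph (completeGraph (Fin 6)))
    (e : H.coe ≃g completeBipartiteGraph (Fin 3) (Fin 3))
    (hcyc : ∀ i : Fin 6, H.Adj (f i) (f (i + 1))) :
    ∀ a b, H.Adj a b ↔ mixedF f a b := by
  obtain ⟨A, B, disj, cover, hAdj⟩ := k33_char H e
  have hver := verts_univ f H hcyc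
  have hcoverU : A ∪ B = Set.univ := cover.trans hver
  -- step lemma
  have step : ∀ i : Fin 6, (f i ∈ A → f (i + 1) ∈ B) ∧ (f i ∈ B → f (i + 1) ∈ A) := by
    intro i
    rcases (hAdj _ _).mp (hcyc i) with ⟨h1, h2⟩ | ⟨h1, h2⟩
    · exact ⟨fun _ => h2, fun hB => absurd h1 (Set.disjoint_right.mp disj hB)⟩
    · exact ⟨fun hA => absurd h1 (Set.disjoint_left.mp disj hA), fun _ => h2⟩
  have hsub : ∀ u v : Set (Fin 6), Disjoint u v → u ∪ v = Set.univ →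
      f 0 ∈ u → f 1 ∈ v → f 2 ∈ u → f 3 ∈ v → f 4 ∈ u → f 5 ∈ v →
      u = Ae f ∧ v = Ao f := by
    intro u v d c h0 h1 h2 h3 h4 h5
    constructor
    · apply Set.eq_of_subset_of_subset
      · intro x hx
        obtain ⟨i, rfl⟩ := (hfbij f).surjective x
        rw [mem_Ae_iff]
        fin_cases i
        · exact Or.inl rfl
        · exact absurd hx (Set.disjoint_right.mp d h1)
        · exact Or.inr (Or.inl rfl)
        · exact absurd hx (Set.disjoint_right.mp d h3)
        · exact Or.inr (Or.inr rfl)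
        · exact absurd hx (Set.disjoint_right.mp d h5)
      · intro x hx
        rcases hx with rfl | rfl | rfl
        exacts [h0, h2, h4]
    · apply Set.eq_of_subset_of_subset
      · intro x hx
        obtain ⟨i, rfl⟩ := (hfbij f).surjective x
        rw [mem_Ao_iff]
        fin_cases i
        · exact absurd hx (Set.disjoint_left.mp d h0)
        · exact Or.inl rfl
        · exact absurd hx (Set.disjoint_left.mp d h2)
        · exact Or.inr (Or.inl rfl)
        · exact absurd hx (Set.disjoint_left.mp d h4)
        · exact Or.inr (Or.inr rfl)
      · intro x hx
        rcases hx with rfl | rfl | rfl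
        exacts [h1, h3, h5]
  have h0m : f 0 ∈ A ∪ B := hcoverU ▸ Set.mem_univ _
  have e01 : (0 : Fin 6) + 1 = 1 := rfl
  have e12 : (1 : Fin 6) + 1 = 2 := rfl
  have e23 : (2 : Fin 6) + 1 = 3 := rfl
  have e34 : (3 : Fin 6) + 1 = 4 := rfl
  have e45 : (4 : Fin 6) + 1 = 5 := rfl
  rcases h0m with h0 | h0
  · have h1 := (step 0).1 h0; rw [e01] at h1
    have h2 := (step 1).2 h1; rw [e12] at h2
    have h3 := (step 2).1 h2; rw [e23] at h3
    have h4 := (step 3).2 h3; rw [e34] at h4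
    have h5 := (step 4).1 h4; rw [e45] at h5
    obtain ⟨rfl, rfl⟩ := hsub A B disj hcoverU h0 h1 h2 h3 h4 h5
    exact hAdj
  · have h1 := (step 0).2 h0; rw [e01] at h1
    have h2 := (step 1).1 h1; rw [e12] at h2
    have h3 := (step 2).2 h2; rw [e23] at h3
    have h4 := (step 3).1 h3; rw [e34] at h4
    have h5 := (step 4).2 h4; rw [e45] at h5
    obtain ⟨rfl, rfl⟩ := hsub B A disj.symm (Set.union_comm A B ▸ hcoverU) h0 h1 h2 h3 h4 h5
    intro a b
    rw [hAdj]
    unfold mixedF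
    tauto
end Parity

section Exist33
variable (f : Fin 6 ↪ Fin 6)

lemma disjAeAo : Disjoint (Ae f) (Ao f) := by
  rw [Set.disjoint_left]
  intro x hxe hxo
  rcases hxe with rfl | rfl | rfl <;>
    rcases hxo with h | h | h <;>
      exact absurd (f.injective h) (by decide)

def H0 : Subgraph (completeGraph (Fin 6)) where
  verts := Set.univ
  Adj a b := mixedF f a b
  adj_sub := by
    rintro a b (⟨h1, h2⟩ | ⟨h1, h2⟩) <;>
      [skip; skip] <;>
      · simp only [completeGraph, top_adj]
        rintro rfl
        first
        | exact Set.disjoint_left.mp (disjAeAo f) h1 h2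
        | exact Set.disjoint_left.mp (disjAeAo f) h2 h1
  edge_vert := fun _ => Set.mem_univ _
  symm := by
    constructor
    rintro a b (⟨h1, h2⟩ | ⟨h1, h2⟩)
    · exact Or.inr ⟨h2, h1⟩
    · exact Or.inl ⟨h2, h1⟩

def tmap : Fin 6 → Fin 3 ⊕ Fin 3 :=
  ![Sum.inl 0, Sum.inr 0, Sum.inl 1, Sum.inr 1, Sum.inl 2, Sum.inr 2]

lemma tmap_bij : Function.Bijective tmap := by decide

lemma key33 : ∀ i j : Fin 6,
    (completeBipartiteGraph (Fin 3) (Fin 3)).Adj (tmap i) (tmap j) ↔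
      ((i = 0 ∨ i = 2 ∨ i = 4) ∧ (j = 1 ∨ j = 3 ∨ j = 5)) ∨
      ((i = 1 ∨ i = 3 ∨ i = 5) ∧ (j = 0 ∨ j = 2 ∨ j = 4)) := by
  intro i j; fin_cases i <;> fin_cases j <;> simp [tmap, Matrix.cons_val_fin_one, show ((5:Fin 6)) = Fin.mk 5 (by norm_num) from rfl] <;> rfl

noncomputable def isoH0 : (H0 f).coe ≃g completeBipartiteGraph (Fin 3) (Fin 3) := by
  refine ⟨(Equiv.Set.univ (Fin 6)).trans
    ((Equiv.ofBijective f (hfbij f)).symm.trans (Equiv.ofBijective tmap tmap_bij)), ?_⟩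
  rintro ⟨a, _⟩ ⟨b, _⟩
  obtain ⟨i, rfl⟩ := (hfbij f).surjective a
  obtain ⟨j, rfl⟩ := (hfbij f).surjective b
  have hi : (Equiv.ofBijective f (hfbij f)).symm (f i) = i :=
    (Equiv.ofBijective f (hfbij f)).symm_apply_apply i
  have hj : (Equiv.ofBijective f (hfbij f)).symm (f j) = j :=
    (Equiv.ofBijective f (hfbij f)).symm_apply_apply j
  show (completeBipartiteGraph (Fin 3) (Fin 3)).Adj (tmap ((Equiv.ofBijective f (hfbij f)).symm (f i)))
    (tmap ((Equiv.ofBijective f (hfbij f)).symm (f j))) ↔ _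
  rw [hi, hj]
  rw [key33]
  show _ ↔ (H0 f).Adj (f i) (f j)
  show _ ↔ mixedF f (f i) (f j)
  unfold mixedF
  rw [mem_Ae_iff, mem_Ao_iff, mem_Ae_iff, mem_Ao_iff]

lemma H0_contains (i : Fin 6) : (H0 f).Adj (f i) (f (i + 1)) := by
  show mixedF f (f i) (f (i + 1))
  unfold mixedF
  rw [mem_Ae_iff, mem_Ao_iff, mem_Ae_iff, mem_Ao_iff]
  fin_cases i <;> decide
end Exist33

section K5
variable (g : Fin 5 ↪ Fin 6)

lemma k5_char (H : Subgraph (completeGraph (Fin 6)))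
    (e : H.coe ≃g completeGraph (Fin 5)) :
    H.verts.ncard = 5 ∧ ∀ a b, H.Adj a b ↔ a ∈ H.verts ∧ b ∈ H.verts ∧ a ≠ b := by
  constructor
  · rw [← Nat.card_coe_set_eq, Nat.card_congr e.toEquiv, Nat.card_eq_fintype_card,
      Fintype.card_fin]
  · intro a b
    constructor
    · intro hab
      refine ⟨H.edge_vert hab, H.edge_vert hab.symm, hab.ne⟩
    · rintro ⟨ha, hb, hne⟩
      have : (completeGraph (Fin 5)).Adj (e ⟨a, ha⟩) (e ⟨b, hb⟩) := by
        simp only [completeGraph, top_adj, ne_eq]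
        intro h
        exact hne (Subtype.ext_iff.mp (e.toEquiv.injective h))
      exact e.map_adj_iff.mp this

lemma range_ncard : (Set.range g).ncard = 5 := by
  rw [← Nat.card_coe_set_eq, Nat.card_congr (Equiv.ofInjective g g.injective).symm,
    Nat.card_eq_fintype_card, Fintype.card_fin]

def H1 : Subgraph (completeGraph (Fin 6)) where
  verts := Set.range g
  Adj a b := a ∈ Set.range g ∧ b ∈ Set.range g ∧ a ≠ b
  adj_sub := fun ⟨_, _, h⟩ => h
  edge_vert := fun ⟨h, _, _⟩ => h
  symm := ⟨fun a b ⟨h1, h2, h3⟩ => ⟨h2, h1, h3.symm⟩⟩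

noncomputable def isoH1 : (H1 g).coe ≃g completeGraph (Fin 5) := by
  refine ⟨(Equiv.ofInjective g g.injective).symm, ?_⟩
  intro x y
  simp only [completeGraph, top_adj, ne_eq, EmbeddingLike.apply_eq_iff_eq]
  refine Iff.trans (not_congr (Equiv.ofInjective g g.injective).symm.injective.eq_iff) ?_
  show ¬x = y ↔ (H1 g).Adj ↑x ↑y
  constructor
  · intro h
    exact ⟨x.2, y.2, fun hh => h (Subtype.ext hh)⟩
  · rintro ⟨_, _, hne⟩ rfl
    exact hne rfl

lemma H1_contains (i : Fin 5) : (H1 g).Adj (g i) (g (i + 1)) := by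
  refine ⟨⟨i, rfl⟩, ⟨i + 1, rfl⟩, fun h => ?_⟩
  have := g.injective h
  fin_cases i <;> exact absurd this (by decide)
end K5

theorem K6_cycles_in_unique_subgraph :
    (∀ E : Finset (Sym2 (Fin 6)), IsCycleEdgeSet 6 6 E →
      Nat.card {H : SimpleGraph.Subgraph (completeGraph (Fin 6)) //
        Nonempty (H.coe ≃g completeBipartiteGraph (Fin 3) (Fin 3)) ∧
        ∀ e ∈ E, e ∈ H.edgeSet} = 1) ∧
    (∀ E : Finset (Sym2 (Fin 6)), IsCycleEdgeSet 6 5 E →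
      Nat.card {H : SimpleGraph.Subgraph (completeGraph (Fin 6)) //
        Nonempty (H.coe ≃g completeGraph (Fin 5)) ∧
        ∀ e ∈ E, e ∈ H.edgeSet} = 1) := by
  constructor
  · rintro E ⟨-, f, rfl⟩
    rw [Nat.card_eq_one_iff_unique]
    constructor
    · constructor
      rintro ⟨H, ⟨e⟩, hE⟩ ⟨H', ⟨e'⟩, hE'⟩
      have hcyc : ∀ i : Fin 6, H.Adj (f i) (f (i + 1)) := fun i =>
        Subgraph.mem_edgeSet.mp (hE _ (Finset.mem_image.mpr ⟨i, Finset.mem_univ _, rfl⟩))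
      have hcyc' : ∀ i : Fin 6, H'.Adj (f i) (f (i + 1)) := fun i =>
        Subgraph.mem_edgeSet.mp (hE' _ (Finset.mem_image.mpr ⟨i, Finset.mem_univ _, rfl⟩))
      apply Subtype.ext
      apply SimpleGraph.Subgraph.ext
      · rw [verts_univ f H hcyc, verts_univ f H' hcyc']
      · ext a b
        rw [adj_char f H e hcyc, adj_char f H' e' hcyc']
    · refine ⟨⟨H0 f, ⟨isoH0 f⟩, ?_⟩⟩
      intro e he
      obtain ⟨i, -, rfl⟩ := Finset.mem_image.mp he
      exact Subgraph.mem_edgeSet.mpr (H0_contains f i)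
  · rintro E ⟨-, g, rfl⟩
    rw [Nat.card_eq_one_iff_unique]
    have key : ∀ (H : Subgraph (completeGraph (Fin 6))),
        (H.coe ≃g completeGraph (Fin 5)) →
        (∀ i : Fin 5, H.Adj (g i) (g (i + 1))) →
        Set.range g = H.verts ∧ ∀ a b, H.Adj a b ↔ a ∈ H.verts ∧ b ∈ H.verts ∧ a ≠ b := by
      intro H e hcyc
      obtain ⟨hcard, hadj⟩ := k5_char H e
      refine ⟨?_, hadj⟩
      apply Set.eq_of_subset_of_ncard_le
      · rintro x ⟨i, rfl⟩
        exact H.edge_vert (hcyc i)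
      · rw [hcard, range_ncard]
      · exact Set.toFinite _
    constructor
    · constructor
      rintro ⟨H, ⟨e⟩, hE⟩ ⟨H', ⟨e'⟩, hE'⟩
      have hcyc : ∀ i : Fin 5, H.Adj (g i) (g (i + 1)) := fun i =>
        Subgraph.mem_edgeSet.mp (hE _ (Finset.mem_image.mpr ⟨i, Finset.mem_univ _, rfl⟩))
      have hcyc' : ∀ i : Fin 5, H'.Adj (g i) (g (i + 1)) := fun i =>
        Subgraph.mem_edgeSet.mp (hE' _ (Finset.mem_image.mpr ⟨i, Finset.mem_univ _, rfl⟩))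
      obtain ⟨hv, ha⟩ := key H e hcyc
      obtain ⟨hv', ha'⟩ := key H' e' hcyc'
      apply Subtype.ext
      apply SimpleGraph.Subgraph.ext
      · rw [← hv, ← hv']
      · ext a b
        rw [ha, ha', ← hv, ← hv']
    · refine ⟨⟨H1 g, ⟨isoH1 g⟩, ?_⟩⟩
      intro e he
      obtain ⟨i, -, rfl⟩ := Finset.mem_image.mp he
      exact Subgraph.mem_edgeSet.mpr (H1_contains g i)
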